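/- arXiv:1211.2897 — 6 statements merged into one kernel-verified Lean document; each statement's English description precedes it below -/
import Mathlib

section
/- Let K, M be integers with M ≥ 2, and for each i ∈ {1,...,K} let T_i ⊆ {1,...,K} with |T_i| ≤ M. For S ⊆ {1,...,K} define C_S = {i : T_i ∩ S ≠ ∅}. If there exists A ⊂ {1,...,K} with |A| = n < K and |C_A| ≤ (M−1)n + 1, then there exists B ⊆ {1,...,K} with |B| = n + 1 and |C_B| ≤ (M−1)(n+1) + 1. -/
lemma arith_aux (M n c d s' : ℤ) (hM : 2 ≤ M) (hd : 2 ≤ d)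
    (hc : c ≤ (M-1)*n+1) (hc0 : 0 ≤ c) (hn : 0 ≤ n)
    (hs : c + s' = n + d)
    (h : d*((M-1)*n+M+1) ≤ M*s' + d*c) : False := by
  rcases le_or_gt d M with hdM | hdM
  · nlinarith [mul_nonneg hc0 (sub_nonneg.2 hdM), mul_nonneg hn (by nlinarith : (0:ℤ) ≤ (M-1)*d - M)]
  · nlinarith [mul_nonneg hn (by nlinarith : (0:ℤ) ≤ M - 2), mul_nonpos_of_nonneg_of_nonpos (sub_nonneg.2 hc) (by linarith : M - d ≤ 0)]

/-- Induction step: a set of `n` transmitters carrying at most `(M-1)n+1` messages can be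
grown to `n+1` transmitters carrying at most `(M-1)(n+1)+1` messages. -/
theorem stmt_1 (K M n : ℕ) (hM : 2 ≤ M)
    (T : ℕ → Finset ℕ)
    (hT : ∀ i ∈ Finset.Icc 1 K, T i ⊆ Finset.Icc 1 K ∧ (T i).card ≤ M)
    (A : Finset ℕ) (hA : A ⊂ Finset.Icc 1 K) (hAn : A.card = n) (hn : n < K)
    (hCA : ((Finset.Icc 1 K).filter (fun i => ((T i) ∩ A).Nonempty)).card ≤ (M - 1) * n + 1) :
    ∃ B ⊆ Finset.Icc 1 K, B.card = n + 1 ∧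
      ((Finset.Icc 1 K).filter (fun i => ((T i) ∩ B).Nonempty)).card ≤ (M - 1) * (n + 1) + 1 := by
  set S := Finset.Icc 1 K with hS
  have hScard : S.card = K := by simp [hS]
  have hAsub : A ⊆ S := hA.subset
  rcases eq_or_lt_of_le (Nat.succ_le_of_lt hn) with hK1 | hK2
  · -- K = n + 1 : take B = S
    refine ⟨S, le_refl _, by rw [hScard, ← hK1], ?_⟩
    have h1 : ((S.filter (fun i => ((T i) ∩ S).Nonempty))).card ≤ K := by
      calc _ ≤ S.card := Finset.card_filter_le _ _
        _ = K := hScard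
    have h2 : 1 ≤ M - 1 := by omega
    calc ((S.filter (fun i => ((T i) ∩ S).Nonempty))).card ≤ K := h1
      _ = n + 1 := hK1.symm
      _ = 1 * (n + 1) := (one_mul _).symm
      _ ≤ (M - 1) * (n + 1) := Nat.mul_le_mul_right _ h2
      _ ≤ (M - 1) * (n + 1) + 1 := Nat.le_succ _
  · -- K ≥ n + 2
    set c := (S.filter (fun i => ((T i) ∩ A).Nonempty)).card with hc
    set S' := S.filter (fun i => ¬ ((T i) ∩ A).Nonempty) with hS'
    have hcs : c + S'.card = K := by
      rw [hc, hS', Finset.card_filter_add_card_filter_not, hScard]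
    -- count Nt for t ∈ S \ A
    have hsum : ∑ t ∈ S \ A, (S'.filter (fun i => t ∈ T i)).card ≤ M * S'.card := by
      have : ∀ t, (S'.filter (fun i => t ∈ T i)).card = ∑ i ∈ S', if t ∈ T i then 1 else 0 := by
        intro t; rw [Finset.card_filter]
      simp_rw [this]
      rw [Finset.sum_comm]
      have : ∀ i ∈ S', (∑ t ∈ S \ A, if t ∈ T i then 1 else 0) ≤ M := by
        intro i hi
        have hiS : i ∈ S := (Finset.mem_filter.mp hi).1
        calc (∑ t ∈ S \ A, if t ∈ T i then 1 else 0)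
            = ((S \ A).filter (fun t => t ∈ T i)).card := (Finset.card_filter _ _).symm
          _ ≤ (T i).card := Finset.card_le_card (fun t ht => (Finset.mem_filter.mp ht).2)
          _ ≤ M := (hT i hiS).2
      calc ∑ i ∈ S', (∑ t ∈ S \ A, if t ∈ T i then 1 else 0)
          ≤ ∑ _i ∈ S', M := Finset.sum_le_sum this
        _ = S'.card * M := Finset.sum_const _
        _ = M * S'.card := Nat.mul_comm _ _
    have hSA : (S \ A).card = K - n := by rw [Finset.card_sdiff_of_subset hAsub, hScard, hAn]
    -- find a good t
    have key : ∃ t ∈ S \ A, (S'.filter (fun i => t ∈ T i)).card + c ≤ (M - 1) * n + M := by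
      by_contra hcon
      push_neg at hcon
      have hlow : (K - n) * ((M - 1) * n + M + 1) ≤ M * S'.card + (K - n) * c := by
        calc (K - n) * ((M - 1) * n + M + 1)
            = ∑ _t ∈ S \ A, ((M - 1) * n + M + 1) := by rw [Finset.sum_const, hSA, smul_eq_mul]
          _ ≤ ∑ t ∈ S \ A, ((S'.filter (fun i => t ∈ T i)).card + c) :=
              Finset.sum_le_sum (fun t ht => hcon t ht)
          _ = (∑ t ∈ S \ A, (S'.filter (fun i => t ∈ T i)).card) + (K - n) * c := by
              rw [Finset.sum_add_distrib, Finset.sum_const, hSA, smul_eq_mul]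
          _ ≤ M * S'.card + (K - n) * c := by omega
      -- cast to ℤ and derive contradiction
      have hnK : n ≤ K := le_of_lt hn
      have hd2 : 2 ≤ K - n := by omega
      refine arith_aux (M : ℤ) (n : ℤ) (c : ℤ) ((K : ℤ) - n) (S'.card : ℤ) (by exact_mod_cast hM)
        (by push_cast; omega) ?_ (by positivity) (by positivity) (by push_cast; omega) ?_
      · have hM1 : (1:ℕ) ≤ M := by omega
        have : ((M : ℤ) - 1) = ((M - 1 : ℕ) : ℤ) := by omega
        rw [this]
        exact_mod_cast hCA
      · have hM1 : (1:ℕ) ≤ M := by omega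
        have e1 : ((M : ℤ) - 1) = ((M - 1 : ℕ) : ℤ) := by omega
        have e2 : ((K : ℤ) - n) = ((K - n : ℕ) : ℤ) := by push_cast [hnK]; ring
        rw [e1, e2]
        exact_mod_cast hlow
    obtain ⟨t, htSA, ht⟩ := key
    have htS : t ∈ S := (Finset.mem_sdiff.mp htSA).1
    have htA : t ∉ A := (Finset.mem_sdiff.mp htSA).2
    refine ⟨insert t A, ?_, ?_, ?_⟩
    · exact Finset.insert_subset htS hAsub
    · rw [Finset.card_insert_of_notMem htA, hAn]
    · -- C_B ⊆ C_A ∪ newMessages(t)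
      have hsub : (S.filter (fun i => ((T i) ∩ insert t A).Nonempty)) ⊆
          (S.filter (fun i => ((T i) ∩ A).Nonempty)) ∪ (S'.filter (fun i => t ∈ T i)) := by
        intro i hi
        obtain ⟨hiS, x, hx⟩ := Finset.mem_filter.mp hi
        rw [Finset.mem_inter, Finset.mem_insert] at hx
        rw [Finset.mem_union, Finset.mem_filter, Finset.mem_filter, hS', Finset.mem_filter]
        by_cases hmeet : ((T i) ∩ A).Nonempty
        · exact Or.inl ⟨hiS, hmeet⟩
        · refine Or.inr ⟨⟨hiS, hmeet⟩, ?_⟩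
          rcases hx.2 with rfl | hxA
          · exact hx.1
          · exact absurd ⟨x, Finset.mem_inter.mpr ⟨hx.1, hxA⟩⟩ hmeet
      have h1 : (S.filter (fun i => ((T i) ∩ insert t A).Nonempty)).card ≤
          c + (S'.filter (fun i => t ∈ T i)).card := by
        calc _ ≤ ((S.filter (fun i => ((T i) ∩ A).Nonempty)) ∪ (S'.filter (fun i => t ∈ T i))).card :=
              Finset.card_le_card hsub
          _ ≤ _ := Finset.card_union_le _ _
      have h2 : (M - 1) * (n + 1) + 1 = (M - 1) * n + M := by
        have : (M - 1) * (n + 1) = (M - 1) * n + (M - 1) := by ring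
        omega
      omega
end

section
/- Let M ≥ 2 and let K be a positive integer such that (K−1)/M is an integer. For each i ∈ {1,...,K} let T_i ⊆ {1,...,K} with |T_i| ≤ M, and define C_S = {i : T_i ∩ S ≠ ∅} for S ⊆ {1,...,K}. Then there exists a set S ⊆ {1,...,K} with |S| = (K−1)/M and |C_S| ≤ (K(M−1)+1)/M = K − |S|. -/
private lemma sub_div_mono (M D : ℕ) (hM : 0 < M) (hMD : M ≤ D) {a b : ℕ} (hab : a ≤ b) :
    a - M * a / D ≤ b - M * b / D := by
  have hD : 0 < D := lt_of_lt_of_le hM hMD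
  induction hab with
  | refl => exact le_rfl
  | @step c h ih =>
      refine le_trans ih ?_
      have hq : M * c / D ≤ c := by
        calc M * c / D ≤ M * c / M := Nat.div_le_div_left hMD hM
        _ = c := Nat.mul_div_cancel_left c hM
      have hq' : M * (c + 1) / D ≤ M * c / D + 1 := by
        have h1 : M * (c + 1) ≤ M * c + D := by
          rw [Nat.mul_succ]; omega
        calc M * (c + 1) / D ≤ (M * c + D) / D := Nat.div_le_div_right h1
          _ = M * c / D + 1 := Nat.add_div_right _ hD
      simp only [Nat.succ_eq_add_one]
      omega

private lemma step_bound (M n t : ℕ) (hM : 2 ≤ M) (ht : t + 1 ≤ n) :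
    M * (n - (t + 1)) + max (t + 1) 1 + M * (M * (n - t) + max t 1) / (M * n + 1 - t)
      ≤ M * (n - t) + max t 1 := by
  obtain ⟨m, rfl⟩ : ∃ m, M = m + 2 := ⟨M - 2, by omega⟩
  obtain ⟨a, rfl⟩ : ∃ a, n = t + 1 + a := ⟨n - (t + 1), by omega⟩
  simp only [show t + 1 + a - (t + 1) = a from by omega, show t + 1 + a - t = a + 1 from by omega]
  rcases Nat.eq_zero_or_pos t with rfl | htpos
  · simp only [Nat.sub_zero, Nat.zero_add, max_self]
    have hde : (m + 2) * (0 + 1 + a) + 1 = (m + 2) * (a + 1) + 1 := by ring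
    rw [hde]
    have hmax : max 0 1 = 1 := rfl
    rw [hmax]
    rw [Nat.mul_div_cancel _ (show 0 < (m + 2) * (a + 1) + 1 by positivity)]
    have h4 : (m + 2) * (a + 1) = (m + 2) * a + (m + 2) := by ring
    linarith
  · rw [show max t 1 = t from by omega, show max (t + 1) 1 = t + 1 from by omega]
    have h1 : (m + 2) * (t + 1 + a) = (m + 2) * (a + 1) + (m + 2) * t := by ring
    have h2 : 2 * t ≤ (m + 2) * t := Nat.mul_le_mul_right t (by omega)
    have hDpos : 0 < (m + 2) * (t + 1 + a) + 1 - t := by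
      have h3 : t ≤ (m + 2) * t := by linarith
      rw [h1]
      have h5 : 0 ≤ (m + 2) * (a + 1) := Nat.zero_le _
      have : t < (m + 2) * (a + 1) + (m + 2) * t + 1 := by linarith
      exact Nat.sub_pos_of_lt this
    have hultD : (m + 2) * (a + 1) + t < (m + 2) * (t + 1 + a) + 1 - t := by
      rw [h1, add_assoc, Nat.add_sub_assoc (by linarith)]
      refine Nat.add_lt_add_left ?_ _
      exact lt_tsub_iff_right.mpr (by linarith)
    have hq : (m + 2) * ((m + 2) * (a + 1) + t) / ((m + 2) * (t + 1 + a) + 1 - t) < m + 2 :=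
      (Nat.div_lt_iff_lt_mul hDpos).mpr (mul_lt_mul_of_pos_left hultD (by omega))
    have h4 : (m + 2) * (a + 1) = (m + 2) * a + (m + 2) := by ring
    linarith


private lemma main_induction (K M n : ℕ) (hM : 2 ≤ M) (hM0 : 0 < M) (hKn : K = M * n + 1)
    (T : ℕ → Finset ℕ)
    (hT : ∀ i ∈ Finset.Icc 1 K, T i ⊆ Finset.Icc 1 K ∧ (T i).card ≤ M) :
    ∀ t, t ≤ n → ∃ S ⊆ Finset.Icc 1 K, S.card = t ∧
      M * (n - t) + max t 1 ≤ ((Finset.Icc 1 K).filter (fun i => T i ∩ S = ∅)).card := by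
  intro t
  induction t with
  | zero =>
    intro _
    refine ⟨∅, Finset.empty_subset _, Finset.card_empty, ?_⟩
    have hfe : (Finset.Icc 1 K).filter (fun i => T i ∩ (∅ : Finset ℕ) = ∅) = Finset.Icc 1 K :=
      Finset.filter_true_of_mem (by simp)
    rw [hfe, Nat.card_Icc, hKn]
    simp
  | succ t ih =>
    intro hst
    obtain ⟨S, hSsub, hScard, hu⟩ := ih (by omega)
    set U := (Finset.Icc 1 K).filter (fun i => T i ∩ S = ∅) with hUdef
    set D := K - t with hDdef
    set A := Finset.Icc 1 K \ S with hAdef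
    have hAcard : A.card = D := by
      rw [hAdef, Finset.card_sdiff_of_subset hSsub, Nat.card_Icc, hScard, hDdef]
      omega
    have hnMn : n ≤ M * n := Nat.le_mul_of_pos_left n hM0
    have htK : t < K := by rw [hKn]; linarith
    have hMD : M ≤ D := by
      have e1 : M * (t + 1) ≤ M * n := Nat.mul_le_mul_left M hst
      have e2 : t ≤ M * t := Nat.le_mul_of_pos_left t hM0
      have e3 : M * (t + 1) = M * t + M := by ring
      have : M + t ≤ K := by rw [hKn]; linarith
      rw [hDdef]
      omega
    have hDpos : 0 < D := by omega
    -- double counting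
    have hUIcc : U ⊆ Finset.Icc 1 K := Finset.filter_subset _ _
    have hsum : ∑ j ∈ A, (U.filter (fun i => j ∈ T i)).card ≤ M * U.card := by
      calc ∑ j ∈ A, (U.filter (fun i => j ∈ T i)).card
          = ∑ j ∈ A, ∑ i ∈ U, (if j ∈ T i then 1 else 0) :=
            Finset.sum_congr rfl fun j _ => Finset.card_filter _ _
        _ = ∑ i ∈ U, ∑ j ∈ A, (if j ∈ T i then 1 else 0) := Finset.sum_comm
        _ = ∑ i ∈ U, (A.filter (fun j => j ∈ T i)).card :=
            Finset.sum_congr rfl fun i _ => (Finset.card_filter _ _).symm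
        _ ≤ ∑ i ∈ U, M := by
            refine Finset.sum_le_sum fun i hi => ?_
            have hsub : A.filter (fun j => j ∈ T i) ⊆ T i :=
              fun j hj => (Finset.mem_filter.mp hj).2
            exact le_trans (Finset.card_le_card hsub) (hT i (hUIcc hi)).2
        _ = M * U.card := by rw [Finset.sum_const, smul_eq_mul, mul_comm]
    -- choose a good j
    have hex : ∃ j ∈ A, D * (U.filter (fun i => j ∈ T i)).card ≤ M * U.card := by
      by_contra hcon
      push_neg at hcon
      have hlb : ∀ j ∈ A, (M * U.card) / D + 1 ≤ (U.filter (fun i => j ∈ T i)).card := by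
        intro j hj
        have := hcon j hj
        have h2 : M * U.card / D < (U.filter (fun i => j ∈ T i)).card := by
          rw [Nat.div_lt_iff_lt_mul hDpos]
          calc M * U.card < D * (U.filter (fun i => j ∈ T i)).card := this
            _ = (U.filter (fun i => j ∈ T i)).card * D := mul_comm _ _
        omega
      have h3 : A.card * (M * U.card / D + 1) ≤ ∑ j ∈ A, (U.filter (fun i => j ∈ T i)).card := by
        simpa using Finset.card_nsmul_le_sum A _ _ hlb
      rw [hAcard] at h3
      have h4 : D * (M * U.card / D) + M * U.card % D = M * U.card := Nat.div_add_mod _ _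
      have h5 : M * U.card % D < D := Nat.mod_lt _ hDpos
      have h6 : D * (M * U.card / D + 1) = D * (M * U.card / D) + D := by ring
      have := le_trans h3 hsum
      omega
    obtain ⟨j, hjA, hjgood⟩ := hex
    have hjIcc : j ∈ Finset.Icc 1 K := (Finset.mem_sdiff.mp hjA).1
    have hjS : j ∉ S := (Finset.mem_sdiff.mp hjA).2
    have hdegle : (U.filter (fun i => j ∈ T i)).card ≤ M * U.card / D :=
      (Nat.le_div_iff_mul_le hDpos).mpr (by rw [mul_comm]; exact hjgood)
    refine ⟨insert j S, Finset.insert_subset hjIcc hSsub, by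
        rw [Finset.card_insert_of_notMem hjS, hScard], ?_⟩
    -- new uncovered set
    have hUeq : (Finset.Icc 1 K).filter (fun i => T i ∩ insert j S = ∅)
        = U.filter (fun i => j ∉ T i) := by
      rw [hUdef, Finset.filter_filter]
      refine Finset.filter_congr fun i hi => ?_
      simp only [Finset.eq_empty_iff_forall_notMem, Finset.mem_inter, Finset.mem_insert]
      constructor
      · intro h; exact ⟨fun x hx => h x ⟨hx.1, Or.inr hx.2⟩, fun hj => h j ⟨hj, Or.inl rfl⟩⟩
      · rintro ⟨h1, h2⟩ x ⟨hx1, hx2 | hx3⟩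
        · exact h2 (hx2 ▸ hx1)
        · exact h1 x ⟨hx1, hx3⟩
    rw [hUeq]
    have hcardsplit : (U.filter (fun i => j ∈ T i)).card + (U.filter (fun i => j ∉ T i)).card
        = U.card := Finset.card_filter_add_card_filter_not _
    -- arithmetic chain
    have hDeq : D = M * n + 1 - t := by rw [hDdef, hKn]
    have hstep : M * (n - (t + 1)) + max (t + 1) 1
        ≤ (M * (n - t) + max t 1) - M * (M * (n - t) + max t 1) / D := by
      apply Nat.le_sub_of_add_le
      rw [hDeq]
      exact step_bound M n t hM hst
    have hmono : (M * (n - t) + max t 1) - M * (M * (n - t) + max t 1) / D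
        ≤ U.card - M * U.card / D := sub_div_mono M D hM0 hMD hu
    omega


/-- Main combinatorial existence result: there is a set `S` of `(K-1)/M` transmitters carrying
at most `(K(M-1)+1)/M = K - |S|` messages. -/
theorem stmt_5 (K M : ℕ) (hK : 0 < K) (hM : 2 ≤ M) (hdiv : M ∣ K - 1)
    (T : ℕ → Finset ℕ)
    (hT : ∀ i ∈ Finset.Icc 1 K, T i ⊆ Finset.Icc 1 K ∧ (T i).card ≤ M) :
    ∃ S ⊆ Finset.Icc 1 K, S.card = (K - 1) / M ∧
      ((Finset.Icc 1 K).filter (fun i => ((T i) ∩ S).Nonempty)).card ≤ (K * (M - 1) + 1) / M ∧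
      (K * (M - 1) + 1) / M = K - S.card := by
  have hM0 : 0 < M := by omega
  obtain ⟨n, hc⟩ := hdiv
  have hnval : (K - 1) / M = n := by rw [hc, Nat.mul_div_cancel_left n hM0]
  have hKn : K = M * n + 1 := by
    have := (Nat.sub_eq_iff_eq_add hK).mp hc
    omega
  obtain ⟨S, hSsub, hScard, hu⟩ := main_induction K M n hM hM0 hKn T hT n le_rfl
  have hcov : ((Finset.Icc 1 K).filter (fun i => ((T i) ∩ S).Nonempty)).card
      + ((Finset.Icc 1 K).filter (fun i => T i ∩ S = ∅)).card = K := by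
    have h := Finset.card_filter_add_card_filter_not
      (s := Finset.Icc 1 K) (p := fun i => ((T i) ∩ S).Nonempty)
    simpa [Finset.not_nonempty_iff_eq_empty, Nat.card_Icc] using h
  have hnK : n ≤ K := by
    rw [hKn]; linarith [Nat.le_mul_of_pos_left n hM0]
  have hfin : K * (M - 1) + 1 = M * (K - n) := by
    zify [show 1 ≤ M from by omega, hnK]
    have hKZ : (K : ℤ) = M * n + 1 := by exact_mod_cast hKn
    linear_combination -hKZ
  have hdivEq : (K * (M - 1) + 1) / M = K - n := by
    rw [hfin, Nat.mul_div_cancel_left _ hM0]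
  simp only [Nat.sub_self, Nat.mul_zero, Nat.zero_add] at hu
  exact ⟨S, hSsub, by rw [hScard, hnval], by rw [hdivEq]; omega, by rw [hdivEq, hScard]⟩
end

section
/- Suppose for each K-user channel with message assignment T_{i,K} (i ∈ {1,...,K}) satisfying the local cooperation constraint T_{i,K} ⊆ {i−r(K), ..., i+r(K)} with r(K) = o(K), the sum degrees of freedom η(K) satisfies η(K) ≤ max(|C_S|, K − |S|) for every S ⊆ {1,...,K}, where C_S = {i : T_{i,K} ∩ S ≠ ∅}. Then limsup_{K→∞} η(K)/K ≤ 1/2. -/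
open Filter

/-- Local cooperation cannot achieve an asymptotic per user DoF greater than 1/2. -/
theorem stmt_6 (r : ℕ → ℕ)
    (hr : Tendsto (fun K => (r K : ℝ) / (K : ℝ)) atTop (nhds 0))
    (T : ℕ → ℕ → Finset ℕ)
    (hloc : ∀ K, ∀ i ∈ Finset.Icc 1 K, T K i ⊆ Finset.Icc (i - r K) (i + r K))
    (η : ℕ → ℝ)
    (hbound : ∀ K, ∀ S ⊆ Finset.Icc 1 K,
      η K ≤ ((max ((Finset.Icc 1 K).filter (fun i => ((T K i) ∩ S).Nonempty)).card
                  (K - S.card) : ℕ) : ℝ)) :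
    Filter.limsup (fun K => η K / (K : ℝ)) atTop ≤ 1 / 2 := by
  have key : ∀ a : ℝ, 1/2 < a → ∀ᶠ K : ℕ in atTop, η K / (K:ℝ) ≤ a := by
    intro a ha
    have hg : Tendsto (fun K : ℕ => 1/(K:ℝ) + (r K : ℝ)/(K:ℝ)) atTop (nhds 0) := by
      simpa using (tendsto_one_div_atTop_nhds_zero_nat.add hr)
    have hev : ∀ᶠ K : ℕ in atTop, 1/(K:ℝ) + (r K : ℝ)/(K:ℝ) < a - 1/2 :=
      hg.eventually_lt_const (show (0:ℝ) < a - 1/2 by linarith)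
    filter_upwards [hev, eventually_ge_atTop 1] with K h2 hK1
    have hK0 : (0:ℝ) < K := by exact_mod_cast hK1
    set m := (K+1)/2 with hm
    have hS : Finset.Icc 1 m ⊆ Finset.Icc 1 K :=
      Finset.Icc_subset_Icc le_rfl (by omega)
    have hb := hbound K (Finset.Icc 1 m) hS
    have hfilt : ((Finset.Icc 1 K).filter
        (fun i => ((T K i) ∩ Finset.Icc 1 m).Nonempty)).card ≤ m + r K := by
      have hsub : ((Finset.Icc 1 K).filter
          (fun i => ((T K i) ∩ Finset.Icc 1 m).Nonempty)) ⊆ Finset.Icc 1 (m + r K) := by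
        intro i hi
        simp only [Finset.mem_filter] at hi
        obtain ⟨hiK, hne⟩ := hi
        obtain ⟨j, hj⟩ := hne
        rw [Finset.mem_inter] at hj
        have h1 := Finset.mem_Icc.mp (hloc K i hiK hj.1)
        have h2 := Finset.mem_Icc.mp hj.2
        have h3 := Finset.mem_Icc.mp hiK
        rw [Finset.mem_Icc]
        omega
      calc _ ≤ (Finset.Icc 1 (m + r K)).card := Finset.card_le_card hsub
        _ = m + r K := by rw [Nat.card_Icc]; omega
    have hcard : (Finset.Icc 1 m).card = m := by rw [Nat.card_Icc]; omega
    have hmax : max (((Finset.Icc 1 K).filter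
        fun i => ((T K i) ∩ Finset.Icc 1 m).Nonempty).card) (K - (Finset.Icc 1 m).card)
        ≤ m + r K := by
      rw [hcard]; exact max_le hfilt (by omega)
    have hη : η K ≤ ((m + r K : ℕ) : ℝ) := le_trans hb (by exact_mod_cast hmax)
    have hmle : ((m:ℕ):ℝ) ≤ ((K:ℝ)+1)/2 := by
      have h4 : 2 * m ≤ K + 1 := by omega
      have h5 := (Nat.cast_le (α := ℝ)).mpr h4
      push_cast at h5
      linarith
    have hη2 : η K ≤ ((K:ℝ)+1)/2 + r K := by push_cast at hη; linarith
    rw [div_le_iff₀ hK0]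
    have h2' : (1 + (r K:ℝ))/K < a - 1/2 := by rw [add_div]; exact h2
    have h3 := (div_lt_iff₀ hK0).mp h2'
    nlinarith
  rw [Filter.limsup_eq]
  by_cases hbdd : BddBelow {a : ℝ | ∀ᶠ K in atTop, η K / (K:ℝ) ≤ a}
  · refine le_of_forall_gt_imp_ge_of_dense ?_
    intro a ha
    exact csInf_le hbdd (key a ha)
  · rw [Real.sInf_of_not_bddBelow hbdd]; norm_num
end

section
/- Let M ≥ 2 and suppose that for every K and every message assignment {T_i ⊆ [K] : |T_i| ≤ M}, the sum DoF satisfies η ≤ min over S ⊆ [K] of max(|C_S|, K − |S|), where C_S = {i : T_i ∩ S ≠ ∅}. Then for every K, the optimal sum DoF η(K, M) over all such assignments satisfies η(K, M) ≤ K(M−1)/M + M. -/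
open Finset

private def crel (T : ℕ → Finset ℕ) (I : Finset ℕ) (a b : ℕ) : Prop :=
  a ∈ I ∧ b ∈ I ∧ (T a ∩ T b).Nonempty

private noncomputable def comp (T : ℕ → Finset ℕ) (I : Finset ℕ) (i₀ : ℕ) : Finset ℕ :=
  @Finset.filter _ (fun j => Relation.ReflTransGen (crel T I) i₀ j) (Classical.decPred _) I

private lemma comp_subset (T : ℕ → Finset ℕ) (I : Finset ℕ) (i₀ : ℕ) :
    comp T I i₀ ⊆ I := fun x hx => by
  simp only [comp, mem_filter] at hx
  exact hx.1

private lemma mem_comp_self {T : ℕ → Finset ℕ} {I : Finset ℕ} {i₀ : ℕ} (h : i₀ ∈ I) :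
    i₀ ∈ comp T I i₀ := by
  simp only [comp, mem_filter]
  exact ⟨h, Relation.ReflTransGen.refl⟩

private lemma comp_closed {T : ℕ → Finset ℕ} {I : Finset ℕ} {i₀ j i : ℕ}
    (hj : j ∈ comp T I i₀) (hi : i ∈ I) (hne : (T j ∩ T i).Nonempty) :
    i ∈ comp T I i₀ := by
  simp only [comp, mem_filter] at hj ⊢
  exact ⟨hi, hj.2.tail ⟨hj.1, hi, hne⟩⟩

private lemma comp_escape {T : ℕ → Finset ℕ} {I P : Finset ℕ} {i₀ : ℕ}
    (h0 : i₀ ∈ P) :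
    ∀ i ∈ comp T I i₀, i ∈ P ∨ ∃ j ∈ comp T I i₀, j ∉ P ∧ (T j ∩ P.biUnion T).Nonempty := by
  intro i hi
  simp only [comp, mem_filter] at hi
  obtain ⟨hiI, hr⟩ := hi
  clear hiI
  induction hr with
  | refl => exact Or.inl h0
  | @tail b c hb hbc ih =>
    rcases ih with hbP | hex
    · obtain ⟨hbI, hcI, hne⟩ := hbc
      have hbC : b ∈ comp T I i₀ := by
        simp only [comp, mem_filter]; exact ⟨hbI, hb⟩
      have hcC : c ∈ comp T I i₀ := comp_closed hbC hcI hne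
      by_cases hcP : c ∈ P
      · exact Or.inl hcP
      · obtain ⟨t, ht⟩ := hne
        refine Or.inr ⟨c, hcC, hcP, ⟨t, mem_inter.mpr ⟨(mem_inter.mp ht).2, ?_⟩⟩⟩
        exact mem_biUnion.mpr ⟨b, hbP, (mem_inter.mp ht).1⟩
    · exact Or.inr hex

private lemma grow {M : ℕ} (hM2 : 2 ≤ M) {T : ℕ → Finset ℕ} {I : Finset ℕ} {i₀ : ℕ}
    (h0 : i₀ ∈ I) (hMI : ∀ i ∈ I, (T i).card ≤ M) :
    ∀ a, 1 ≤ a → a ≤ (comp T I i₀).card →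
      ∃ P, P ⊆ comp T I i₀ ∧ P.card = a ∧
        (P.biUnion T).card ≤ (M - 1) * a + 1 := by
  have key : ∀ a, 1 ≤ a → a ≤ (comp T I i₀).card →
      ∃ P, P ⊆ comp T I i₀ ∧ i₀ ∈ P ∧ P.card = a ∧
        (P.biUnion T).card ≤ (M - 1) * a + 1 := by
    intro a
    induction a with
    | zero => omega
    | succ a ih =>
      intro _ hle
      by_cases ha : a = 0
      · subst ha
        refine ⟨{i₀}, ?_, mem_singleton_self i₀, card_singleton i₀, ?_⟩
        · intro x hx
          rw [mem_singleton] at hx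
          subst hx
          exact mem_comp_self h0
        · rw [singleton_biUnion]
          have := hMI i₀ h0
          omega
      · obtain ⟨P, hPsub, h0P, hPcard, hPcost⟩ := ih (by omega) (by omega)
        have hex : ∃ i ∈ comp T I i₀, i ∉ P := by
          by_contra hcon
          push_neg at hcon
          have := card_le_card hcon
          omega
        obtain ⟨i, hiC, hiP⟩ := hex
        rcases comp_escape h0P i hiC with h | ⟨j, hjC, hjP, hjne⟩
        · exact absurd h hiP
        refine ⟨insert j P, insert_subset hjC hPsub, mem_insert_of_mem h0P, ?_, ?_⟩
        · rw [card_insert_of_notMem hjP, hPcard]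
        · rw [biUnion_insert]
          have h1 : (T j ∪ P.biUnion T).card ≤ (T j \ P.biUnion T).card + (P.biUnion T).card := by
            rw [← sdiff_union_self_eq_union]
            exact card_union_le _ _
          have h2 : (T j \ P.biUnion T).card + (T j ∩ P.biUnion T).card = (T j).card :=
            card_sdiff_add_card_inter _ _
          have h3 : 1 ≤ (T j ∩ P.biUnion T).card := card_pos.mpr hjne
          have h4 : (T j).card ≤ M := hMI j (comp_subset T I i₀ hjC)
          have h5 : (M - 1) * (a + 1) = (M - 1) * a + (M - 1) := by ring
          omega
  intro a h1 h2
  obtain ⟨P, hs, _, hc, hco⟩ := key a h1 h2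
  exact ⟨P, hs, hc, hco⟩

private lemma ML {M : ℕ} (hM2 : 2 ≤ M) (T : ℕ → Finset ℕ) :
    ∀ (n : ℕ) (I : Finset ℕ), I.card = n → (∀ i ∈ I, (T i).card ≤ M) →
      ∀ s, s ≤ n → ∃ A, A ⊆ I ∧ A.card = s ∧
        (A.biUnion T).card + n ≤ (M - 1) * s + 1 + max n ((I.biUnion T).card) := by
  intro n
  induction n using Nat.strong_induction_on with
  | _ n ih =>
    intro I hIcard hMI s hs
    rcases Nat.eq_zero_or_pos s with hs0 | hs1
    · subst hs0
      refine ⟨∅, empty_subset _, card_empty, ?_⟩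
      simp only [biUnion_empty, card_empty]
      omega
    have hIne : I.Nonempty := card_pos.mp (by omega)
    obtain ⟨i₀, hi₀⟩ := hIne
    have hCsub : comp T I i₀ ⊆ I := comp_subset T I i₀
    have hm1 : 1 ≤ (comp T I i₀).card := card_pos.mpr ⟨i₀, mem_comp_self hi₀⟩
    have hmn : (comp T I i₀).card ≤ n := hIcard ▸ card_le_card hCsub
    have hI'card : (I \ comp T I i₀).card = n - (comp T I i₀).card := by
      rw [card_sdiff_of_subset hCsub, hIcard]
    have hMI' : ∀ i ∈ I \ comp T I i₀, (T i).card ≤ M := fun i hi => hMI i (sdiff_subset hi)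
    have hdisj : Disjoint ((comp T I i₀).biUnion T) ((I \ comp T I i₀).biUnion T) := by
      rw [disjoint_left]
      intro t htC htI'
      obtain ⟨j, hjC, hjt⟩ := mem_biUnion.mp htC
      obtain ⟨i, hiI', hit⟩ := mem_biUnion.mp htI'
      have hiI : i ∈ I := sdiff_subset hiI'
      have : i ∈ comp T I i₀ := comp_closed hjC hiI ⟨t, mem_inter.mpr ⟨hjt, hit⟩⟩
      exact (mem_sdiff.mp hiI').2 this
    have hsplit : (I.biUnion T).card
        = ((comp T I i₀).biUnion T).card + ((I \ comp T I i₀).biUnion T).card := by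
      have hU : I.biUnion T = (comp T I i₀).biUnion T ∪ (I \ comp T I i₀).biUnion T := by
        ext t
        simp only [mem_biUnion, mem_union, mem_sdiff]
        constructor
        · rintro ⟨i, hiI, hit⟩
          by_cases hiC : i ∈ comp T I i₀
          · exact Or.inl ⟨i, hiC, hit⟩
          · exact Or.inr ⟨i, ⟨hiI, hiC⟩, hit⟩
        · rintro (⟨i, hiC, hit⟩ | ⟨i, ⟨hiI, _⟩, hit⟩)
          · exact ⟨i, hCsub hiC, hit⟩
          · exact ⟨i, hiI, hit⟩
      rw [hU, card_union_of_disjoint hdisj]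
    by_cases hgood : ((comp T I i₀).biUnion T).card ≤ (comp T I i₀).card
    · by_cases hsm : s ≤ (comp T I i₀).card
      · obtain ⟨P, hPsub, hPcard, hPcost⟩ := grow hM2 hi₀ hMI s hs1 hsm
        refine ⟨P, hPsub.trans hCsub, hPcard, ?_⟩
        have : n ≤ max n ((I.biUnion T).card) := le_max_left _ _
        omega
      · push_neg at hsm
        obtain ⟨A', hA'sub, hA'card, hA'cost⟩ :=
          ih (n - (comp T I i₀).card) (by omega) (I \ comp T I i₀) hI'card hMI'
            (s - (comp T I i₀).card) (by omega)
        refine ⟨comp T I i₀ ∪ A', union_subset hCsub (hA'sub.trans sdiff_subset), ?_, ?_⟩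
        · rw [card_union_of_disjoint (disjoint_left.mpr
            (fun x hxC hxA' => (mem_sdiff.mp (hA'sub hxA')).2 hxC))]
          omega
        · have hcost : ((comp T I i₀ ∪ A').biUnion T).card
              ≤ ((comp T I i₀).biUnion T).card + (A'.biUnion T).card := by
            refine le_trans (card_le_card ?_) (card_union_le _ _)
            intro t ht
            obtain ⟨i, hi, hit⟩ := mem_biUnion.mp ht
            rcases mem_union.mp hi with h | h
            · exact mem_union_left _ (mem_biUnion.mpr ⟨i, h, hit⟩)
            · exact mem_union_right _ (mem_biUnion.mpr ⟨i, h, hit⟩)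
          have hmul : (M - 1) * (s - (comp T I i₀).card) + (M - 1) * (comp T I i₀).card
              = (M - 1) * s := by
            rw [← Nat.mul_add, Nat.sub_add_cancel (le_of_lt hsm)]
          have hmm' : (comp T I i₀).card ≤ (M - 1) * (comp T I i₀).card :=
            Nat.le_mul_of_pos_left _ (by omega)
          omega
    · push_neg at hgood
      by_cases hsn : s ≤ n - (comp T I i₀).card
      · obtain ⟨A, hAsub, hAcard, hAcost⟩ :=
          ih (n - (comp T I i₀).card) (by omega) (I \ comp T I i₀) hI'card hMI' s hsn
        exact ⟨A, hAsub.trans sdiff_subset, hAcard, by omega⟩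
      · push_neg at hsn
        have ha1 : 1 ≤ s - (n - (comp T I i₀).card) := by omega
        have ham : s - (n - (comp T I i₀).card) ≤ (comp T I i₀).card := by omega
        obtain ⟨P, hPsub, hPcard, hPcost⟩ := grow hM2 hi₀ hMI _ ha1 ham
        refine ⟨(I \ comp T I i₀) ∪ P,
          union_subset sdiff_subset (hPsub.trans hCsub), ?_, ?_⟩
        · rw [card_union_of_disjoint (disjoint_left.mpr
            (fun x hxI' hxP => (mem_sdiff.mp hxI').2 (hPsub hxP)))]
          omega
        · have hcost : (((I \ comp T I i₀) ∪ P).biUnion T).card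
              ≤ ((I \ comp T I i₀).biUnion T).card + (P.biUnion T).card := by
            refine le_trans (card_le_card ?_) (card_union_le _ _)
            intro t ht
            obtain ⟨i, hi, hit⟩ := mem_biUnion.mp ht
            rcases mem_union.mp hi with h | h
            · exact mem_union_left _ (mem_biUnion.mpr ⟨i, h, hit⟩)
            · exact mem_union_right _ (mem_biUnion.mpr ⟨i, h, hit⟩)
          have hmul : (M - 1) * (s - (n - (comp T I i₀).card))
              + (M - 1) * (n - (comp T I i₀).card) = (M - 1) * s := by
            rw [← Nat.mul_add]
            congr 1
            omega
          have hge : n - (comp T I i₀).card ≤ (M - 1) * (n - (comp T I i₀).card) :=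
            Nat.le_mul_of_pos_left _ (by omega)
          omega

/-- Under the DoF outer bound of Corollary 1, the sum DoF of any `K`-user fully connected
channel with cooperation order `M` is at most `K(M-1)/M + M`. -/
theorem stmt_7 (M : ℕ) (hM : 2 ≤ M)
    (η : (K : ℕ) → (ℕ → Finset ℕ) → ℝ)
    (hbound : ∀ K : ℕ, ∀ T : ℕ → Finset ℕ,
      (∀ i ∈ Finset.Icc 1 K, T i ⊆ Finset.Icc 1 K ∧ (T i).card ≤ M) →
      ∀ S ⊆ Finset.Icc 1 K,
        η K T ≤ ((max ((Finset.Icc 1 K).filter (fun i => ((T i) ∩ S).Nonempty)).card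
                      (K - S.card) : ℕ) : ℝ)) :
    ∀ K : ℕ, ∀ T : ℕ → Finset ℕ,
      (∀ i ∈ Finset.Icc 1 K, T i ⊆ Finset.Icc 1 K ∧ (T i).card ≤ M) →
      η K T ≤ (K : ℝ) * ((M : ℝ) - 1) / (M : ℝ) + (M : ℝ) := by
  intro K T hT
  have hMpos : 0 < M := by omega
  have hdm := Nat.div_add_mod (K + M - 1) M
  have hmlt : (K + M - 1) % M < M := Nat.mod_lt _ hMpos
  have h2 : M * ((K + M - 1) / M) ≤ K + M - 1 := by omega
  have h1 : K ≤ M * ((K + M - 1) / M) := by omega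
  have hKM : K ≤ M * K := Nat.le_mul_of_pos_left K hMpos
  have hsK : (K + M - 1) / M ≤ K := by
    have hlt : M * ((K + M - 1) / M) < M * (K + 1) := by
      have : M * (K + 1) = M * K + M := by ring
      omega
    have := Nat.lt_of_mul_lt_mul_left hlt
    omega
  have hIcard : (Finset.Icc 1 K).card = K := by rw [Nat.card_Icc]; omega
  obtain ⟨A, hAsub, hAcard, hAcost⟩ :=
    ML hM T K (Finset.Icc 1 K) hIcard (fun i hi => (hT i hi).2) ((K + M - 1) / M) hsK
  have hNbar : ((Finset.Icc 1 K).biUnion T).card ≤ K := by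
    have hsub : (Finset.Icc 1 K).biUnion T ⊆ Finset.Icc 1 K := by
      intro t ht
      obtain ⟨i, hi, hit⟩ := Finset.mem_biUnion.mp ht
      exact (hT i hi).1 hit
    calc ((Finset.Icc 1 K).biUnion T).card ≤ (Finset.Icc 1 K).card :=
          Finset.card_le_card hsub
      _ = K := hIcard
  have hAcost' : (A.biUnion T).card ≤ (M - 1) * ((K + M - 1) / M) + 1 := by omega
  have hSsub : Finset.Icc 1 K \ A.biUnion T ⊆ Finset.Icc 1 K := Finset.sdiff_subset
  have hb := hbound K T hT _ hSsub
  -- bound on the number of users whose transmit set meets S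
  have hfilter : ((Finset.Icc 1 K).filter
      (fun i => (T i ∩ (Finset.Icc 1 K \ A.biUnion T)).Nonempty)).card
      ≤ K - (K + M - 1) / M := by
    have hsubset : (Finset.Icc 1 K).filter
        (fun i => (T i ∩ (Finset.Icc 1 K \ A.biUnion T)).Nonempty)
        ⊆ Finset.Icc 1 K \ A := by
      intro i hi
      rw [Finset.mem_filter] at hi
      obtain ⟨hiI, t, ht⟩ := hi
      rw [Finset.mem_inter, Finset.mem_sdiff] at ht
      rw [Finset.mem_sdiff]
      exact ⟨hiI, fun hiA => ht.2.2 (Finset.mem_biUnion.mpr ⟨i, hiA, ht.1⟩)⟩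
    calc _ ≤ (Finset.Icc 1 K \ A).card := Finset.card_le_card hsubset
      _ = K - (K + M - 1) / M := by rw [Finset.card_sdiff_of_subset hAsub, hIcard, hAcard]
  -- bound on K - |S|
  have hScard : K ≤ (Finset.Icc 1 K \ A.biUnion T).card + (A.biUnion T).card := by
    have hcover : Finset.Icc 1 K ⊆ (Finset.Icc 1 K \ A.biUnion T) ∪ A.biUnion T := by
      intro t ht
      by_cases h : t ∈ A.biUnion T
      · exact Finset.mem_union_right _ h
      · exact Finset.mem_union_left _ (Finset.mem_sdiff.mpr ⟨ht, h⟩)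
    calc K = (Finset.Icc 1 K).card := hIcard.symm
      _ ≤ ((Finset.Icc 1 K \ A.biUnion T) ∪ A.biUnion T).card := Finset.card_le_card hcover
      _ ≤ _ := Finset.card_union_le _ _
  have hc2 : K - (Finset.Icc 1 K \ A.biUnion T).card ≤ (M - 1) * ((K + M - 1) / M) + 1 := by
    omega
  -- real arithmetic
  have hM0R : (0 : ℝ) < (M : ℝ) := by positivity
  have hM2R : (2 : ℝ) ≤ (M : ℝ) := by exact_mod_cast hM
  have key : ∀ x : ℕ, (x : ℝ) * M ≤ (K : ℝ) * ((M : ℝ) - 1) + (M : ℝ) * M →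
      (x : ℝ) ≤ (K : ℝ) * ((M : ℝ) - 1) / (M : ℝ) + (M : ℝ) := by
    intro x hx
    rw [div_add' _ _ _ (ne_of_gt hM0R), le_div_iff₀ hM0R]
    linarith
  refine le_trans hb ?_
  rw [Nat.cast_max]
  have h1R : (K : ℝ) ≤ (M : ℝ) * (((K + M - 1) / M : ℕ) : ℝ) := by
    exact_mod_cast h1
  have h2R : (M : ℝ) * (((K + M - 1) / M : ℕ) : ℝ) ≤ (K : ℝ) + (M : ℝ) - 1 := by
    have : ((M * ((K + M - 1) / M) : ℕ) : ℝ) ≤ ((K + M - 1 : ℕ) : ℝ) := by exact_mod_cast h2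
    push_cast at this
    have hKM1 : ((K + M - 1 : ℕ) : ℝ) = (K : ℝ) + (M : ℝ) - 1 := by
      have : 1 ≤ K + M := by omega
      push_cast [Nat.cast_sub this]
      ring
    rw [hKM1] at this
    push_cast at this ⊢
    linarith
  refine max_le (key _ ?_) (key _ ?_)
  · have hf : ((((Finset.Icc 1 K).filter
        (fun i => (T i ∩ (Finset.Icc 1 K \ A.biUnion T)).Nonempty)).card : ℕ) : ℝ)
        ≤ (K : ℝ) - (((K + M - 1) / M : ℕ) : ℝ) := by
      have := (Nat.cast_le (α := ℝ)).mpr hfilter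
      rwa [Nat.cast_sub hsK] at this
    nlinarith [mul_le_mul_of_nonneg_right hf hM0R.le, h1R, mul_self_nonneg ((M : ℝ))]
  · have hf : (((K - (Finset.Icc 1 K \ A.biUnion T).card : ℕ)) : ℝ)
        ≤ ((M : ℝ) - 1) * (((K + M - 1) / M : ℕ) : ℝ) + 1 := by
      have h := (Nat.cast_le (α := ℝ)).mpr hc2
      have hcast : (((M - 1) * ((K + M - 1) / M) + 1 : ℕ) : ℝ)
          = ((M : ℝ) - 1) * (((K + M - 1) / M : ℕ) : ℝ) + 1 := by
        push_cast [Nat.cast_sub (show 1 ≤ M by omega)]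
        ring
      rwa [hcast] at h
    nlinarith [mul_le_mul_of_nonneg_right hf hM0R.le, h2R,
      mul_le_mul_of_nonneg_left h2R (show (0:ℝ) ≤ (M:ℝ) - 1 by linarith)]
end

section
/- Let K, M, L be positive integers with K divisible by 2M+L. Partition {1,...,K} into clusters of 2M+L consecutive indices. Within the cluster {1,...,2M+L}, define S_1 = {1,...,M} and S_2 = {L+M+1,...,L+2M}, and message assignments T_i = {i, i+1, ..., M} for i ∈ S_1 and T_i = {i−L, i−L−1, ..., M+1} for i ∈ S_2. Then (a) every T_i has |T_i| ≤ M; (b) for every i ∈ S_1, no element of T_i is connected to a receiver in S_2, i.e., for all j ∈ T_i and all k ∈ S_2, k ∉ {j, j+1, ..., j+L}; and (c) for every i ∈ S_2, no element of T_i is connected to a receiver in S_1, i.e., for all j ∈ T_i and all k ∈ S_1, k ∉ {j, j+1, ..., j+L}. -/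
/-- Properties of the message assignment used in the zero-forcing scheme achieving per user DoF
`2M/(2M+L)` within a cluster of `2M+L` users: `S₁ = {1,...,M}` with `T i = {i,...,M}`, and
`S₂ = {L+M+1,...,L+2M}` with `T i = {M+1,...,i-L}`; transmitter `j` is connected to
receivers `{j,...,j+L}`. -/
theorem stmt_8 (K M L : ℕ) (hK : 0 < K) (hM : 0 < M) (hL : 0 < L)
    (hdiv : (2 * M + L) ∣ K) :
    (∀ i ∈ Finset.Icc 1 M, (Finset.Icc i M).card ≤ M) ∧
    (∀ i ∈ Finset.Icc (L + M + 1) (L + 2 * M), (Finset.Icc (M + 1) (i - L)).card ≤ M) ∧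
    (∀ i ∈ Finset.Icc 1 M, ∀ j ∈ Finset.Icc i M,
      ∀ k ∈ Finset.Icc (L + M + 1) (L + 2 * M), k ∉ Finset.Icc j (j + L)) ∧
    (∀ i ∈ Finset.Icc (L + M + 1) (L + 2 * M), ∀ j ∈ Finset.Icc (M + 1) (i - L),
      ∀ k ∈ Finset.Icc 1 M, k ∉ Finset.Icc j (j + L)) := by
  refine ⟨?_, ?_, ?_, ?_⟩
  · intro i hi
    simp only [Finset.mem_Icc] at hi
    rw [Nat.card_Icc]
    omega
  · intro i hi
    simp only [Finset.mem_Icc] at hi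
    rw [Nat.card_Icc]
    omega
  · intro i hi j hj k hk
    simp only [Finset.mem_Icc] at *
    omega
  · intro i hi j hj k hk
    simp only [Finset.mem_Icc] at *
    omega
end

section
/- Let K be a positive integer divisible by 3, and consider users 1,...,K with transmitter j connected to receivers j and j+1 (Wyner's asymmetric model, L = 1). Define the assignment: for each block {3m+1, 3m+2, 3m+3}, message W_{3m+1} is at transmitter 3m+1, message W_{3m+3} is at transmitter 3m+2, transmitter 3m+3 is silent, and message W_{3m+2} is not transmitted. Then every transmitted message W_i is received at receiver i with no interference from any other transmitted message: formally, for any two distinct transmitted messages W_i, W_j with transmitters t_i, t_j respectively, receiver i ∉ {t_j, t_j + 1}. -/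
/-- In Wyner's asymmetric model (`L = 1`, transmitter `j` connected to receivers `{j, j+1}`),
the assignment where `W_{3m+1}` is at transmitter `3m+1`, `W_{3m+3}` is at transmitter `3m+2`,
transmitter `3m+3` is silent and `W_{3m+2}` is not transmitted, gives every transmitted message
an interference-free link: receiver `i` is not connected to the transmitter of any other
transmitted message `W_j`. -/
theorem stmt_14 (K : ℕ) (hK : 0 < K) (h3 : 3 ∣ K) :
    ∀ i ∈ Finset.Icc 1 K, ∀ j ∈ Finset.Icc 1 K,
      i % 3 ≠ 2 → j % 3 ≠ 2 → i ≠ j →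
      i ∉ ({(if j % 3 = 1 then j else j - 1),
            (if j % 3 = 1 then j else j - 1) + 1} : Finset ℕ) := by
  intro i hi j hj hi3 hj3 hij
  simp only [Finset.mem_Icc] at hi hj
  simp only [Finset.mem_insert, Finset.mem_singleton]
  split <;> omega
end
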